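/- Let h be a compact Lie algebra, V a nontrivial irreducible real representation of h, and r ≥ 0 such that dim(V ⊕ ℝʳ) = 2n. If h preserves an orthogonal complex structure on V ⊕ ℝʳ (with h acting trivially on ℝʳ and via the given representation on V, preserving an invariant inner product), then h preserves an orthogonal complex structure on V. -/

import Mathlib

open scoped InnerProductSpace

attribute [local instance 100] LieRing.ofAssociativeRing

/-- Let `h` (here `L`) be a (compact) Lie algebra acting by skew-symmetric
endomorphisms on a Euclidean space `W = V ⊕ ℝʳ` of dimension `2n`, where the invariant
subspace `V` carries a nontrivial irreducible action and the action on the orthogonal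
complement `ℝʳ = Vᗮ` is trivial. If the action preserves an orthogonal complex structure
`J` on `W`, then it preserves an orthogonal complex structure on `V`. -/
theorem stmt_8 {L : Type*} [LieRing L] [LieAlgebra ℝ L]
    {W : Type*} [NormedAddCommGroup W] [InnerProductSpace ℝ W] [FiniteDimensional ℝ W]
    (π : L →ₗ⁅ℝ⁆ Module.End ℝ W)
    (hskew : ∀ (x : L) (v w : W), ⟪π x v, w⟫_ℝ = -⟪v, π x w⟫_ℝ)
    (Vs : Submodule ℝ W)
    (hinv : ∀ (x : L), ∀ v ∈ Vs, π x v ∈ Vs)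
    (htriv : ∀ (x : L), ∀ w ∈ Vsᗮ, π x w = 0)
    (hirr : ∀ U : Submodule ℝ W, U ≤ Vs → (∀ (x : L), ∀ v ∈ U, π x v ∈ U) →
      U = ⊥ ∨ U = Vs)
    (hnontriv : ∃ (x : L), ∃ v ∈ Vs, π x v ≠ 0)
    (n r : ℕ) (hr : Module.finrank ℝ Vsᗮ = r)
    (hn : Module.finrank ℝ W = 2 * n) (hn1 : 1 ≤ n)
    (J : W →ₗ[ℝ] W) (hJsq : ∀ w, J (J w) = -w)
    (hJo : ∀ v w, ⟪J v, J w⟫_ℝ = ⟪v, w⟫_ℝ)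
    (hJcomm : ∀ (x : L) (w : W), π x (J w) = J (π x w)) :
    ∃ J₀ : W →ₗ[ℝ] W,
      (∀ v ∈ Vs, J₀ v ∈ Vs) ∧
      (∀ v ∈ Vs, J₀ (J₀ v) = -v) ∧
      (∀ v ∈ Vs, ∀ w ∈ Vs, ⟪J₀ v, J₀ w⟫_ℝ = ⟪v, w⟫_ℝ) ∧
      (∀ (x : L), ∀ v ∈ Vs, π x (J₀ v) = J₀ (π x v)) := by
  -- The common kernel of all `π x`, intersected with `Vs`, is `⊥`.
  set U : Submodule ℝ W := Vs ⊓ ⨅ x : L, LinearMap.ker (π x) with hU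
  have hUle : U ≤ Vs := inf_le_left
  have hUinv : ∀ (x : L), ∀ v ∈ U, π x v ∈ U := by
    intro x v hv
    have hv2 : ∀ y : L, π y v = 0 := fun y =>
      (Submodule.mem_iInf _).mp hv.2 y
    rw [hv2 x]
    exact U.zero_mem
  have hUbot : U = ⊥ := by
    rcases hirr U hUle hUinv with h | h
    · exact h
    · exfalso
      obtain ⟨x, v, hvVs, hne⟩ := hnontriv
      have hvU : v ∈ U := h ▸ hvVs
      exact hne ((Submodule.mem_iInf _).mp hvU.2 x)
  -- Any vector killed by all `π x` lies in `Vsᗮ`.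
  have hker : ∀ k : W, (∀ x : L, π x k = 0) → k ∈ Vsᗮ := by
    intro k hk
    obtain ⟨v, hv, w, hw, rfl⟩ := Vs.exists_add_mem_mem_orthogonal k
    have hv0 : v = 0 := by
      have hvU : v ∈ U := by
        refine ⟨hv, (Submodule.mem_iInf _).mpr fun x => ?_⟩
        show π x v = 0
        have h1 : π x (v + w) = 0 := hk x
        have h2 : π x w = 0 := htriv x w hw
        rw [map_add, h2, add_zero] at h1
        exact h1
      rw [hUbot] at hvU
      simpa using hvU
    rw [hv0, zero_add]
    exact hw
  -- `J` maps `Vsᗮ` into `Vsᗮ`.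
  have hJperp : ∀ w ∈ Vsᗮ, J w ∈ Vsᗮ := by
    intro w hw
    apply hker
    intro x
    rw [hJcomm x w, htriv x w hw, map_zero]
  -- Hence `J` maps `Vs` into `Vs`.
  have hJVs : ∀ v ∈ Vs, J v ∈ Vs := by
    intro v hv
    rw [← Vs.orthogonal_orthogonal]
    intro w hw
    have h1 : J w ∈ Vsᗮ := hJperp w hw
    have : ⟪J v, J (J w)⟫_ℝ = ⟪v, J w⟫_ℝ := hJo v (J w)
    rw [hJsq w] at this
    have h2 : ⟪v, J w⟫_ℝ = 0 := (Vsᗮ.mem_orthogonal' v).mp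
      (by rw [← Vs.orthogonal_orthogonal] at hv; exact hv) (J w) h1
    have h3 : ⟪J v, -w⟫_ℝ = 0 := this.trans h2
    rw [inner_neg_right, neg_eq_zero] at h3
    exact (real_inner_comm _ _).trans h3
  exact ⟨J, hJVs, fun v _ => hJsq v, fun v _ w _ => hJo v w, fun x v _ => hJcomm x v⟩
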